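/- Let p be a prime and let (A, ν) be a commutative ring with pA = 0 and a proper pseudovaluation. An overconvergent Witt vector α ∈ W†(A) is a unit of W†(A) — that is, α has an inverse in W(A) which is again overconvergent — if and only if its zeroth Witt component w₀(α) = a₀ is a unit in A. -/

import Mathlib

open scoped Classical

noncomputable section

/-- A pseudovaluation on a commutative ring `A`: a function `ν : A → ℝ ∪ {±∞}` with
`ν 0 = ∞`, `ν 1 = 0`, `ν (a - b) ≥ min (ν a) (ν b)`, and `ν (a*b) ≥ ν a + ν b`
whenever `ν a ≠ -∞` and `ν b ≠ -∞`. -/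
structure IsPseudovaluation {A : Type*} [CommRing A] (ν : A → EReal) : Prop where
  map_zero : ν 0 = ⊤
  map_one : ν 1 = 0
  min_le_sub : ∀ a b : A, min (ν a) (ν b) ≤ ν (a - b)
  add_le_mul : ∀ a b : A, ν a ≠ ⊥ → ν b ≠ ⊥ → ν a + ν b ≤ ν (a * b)

/-- A proper pseudovaluation never takes the value `-∞`. -/
def IsProperPV {A : Type*} [CommRing A] (ν : A → EReal) : Prop :=
  IsPseudovaluation ν ∧ ∀ a : A, ν a ≠ ⊥

/-- A negative pseudovaluation is proper and satisfies `ν a ≤ 0` for `a ≠ 0`. -/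
def IsNegativePV {A : Type*} [CommRing A] (ν : A → EReal) : Prop :=
  IsPseudovaluation ν ∧ (∀ a : A, ν a ≠ ⊥) ∧ ∀ a : A, a ≠ 0 → ν a ≤ 0

/-- `f` is localizing with respect to `ν` if there are `C > 0`, `D ≥ 0` with
`ν (fⁿ x) ≤ C · ν x + n D` for all `n` and `x`. -/
def IsLocalizing {A : Type*} [CommRing A] (ν : A → EReal) (f : A) : Prop :=
  ∃ C D : ℝ, 0 < C ∧ 0 ≤ D ∧ ∀ (n : ℕ) (x : A),
    ν (f ^ n * x) ≤ (C : EReal) * ν x + (((n : ℝ) * D : ℝ) : EReal)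

/-- Two functions `A → ℝ ∪ {±∞}` are linearly equivalent if they dominate each other
up to positive multiplicative and nonnegative additive constants. -/
def LinearlyEquivalent {A : Type*} (ν₁ ν₂ : A → EReal) : Prop :=
  ∃ c₁ c₂ d₁ d₂ : ℝ, 0 < c₁ ∧ 0 < c₂ ∧ 0 ≤ d₁ ∧ 0 ≤ d₂ ∧
    (∀ a : A, (c₂ : EReal) * ν₂ a - (d₂ : EReal) ≤ ν₁ a) ∧
    (∀ a : A, (c₁ : EReal) * ν₁ a - (d₁ : EReal) ≤ ν₂ a)

/-- The weighted degree pseudovaluation on a multivariate polynomial ring: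
`ν (Σ_k c_k T^k) = inf_k { μ(c_k) - Σ_i k_i d_i }`. -/
def weightedDegPV {R : Type*} [CommRing R] (μ : R → EReal) {m : ℕ} (d : Fin m → ℝ)
    (f : MvPolynomial (Fin m) R) : EReal :=
  ⨅ k : Fin m →₀ ℕ, (μ (MvPolynomial.coeff k f) - ((∑ i, (k i : ℝ) * d i : ℝ) : EReal))

/-- A pseudovaluation `τ` on an `R`-algebra `B` is admissible (relative to `μ` on `R`)
if it is the quotient of a weighted degree pseudovaluation under some surjection
from a polynomial ring. -/
def IsAdmissiblePV {R B : Type*} [CommRing R] [CommRing B] [Algebra R B]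
    (μ : R → EReal) (τ : B → EReal) : Prop :=
  ∃ (m : ℕ) (π : MvPolynomial (Fin m) R →ₐ[R] B) (d : Fin m → ℝ),
    Function.Surjective π ∧ (∀ i, 0 < d i) ∧
    ∀ b : B, τ b = ⨆ (f : MvPolynomial (Fin m) R) (_ : π f = b), weightedDegPV μ d f

/-- The pseudovaluation `μ (Σ_i a_i X^i) = min_i { ν(a_i) - i·d }` on `A[X]`. -/
def polyPV {A : Type*} [CommRing A] (ν : A → EReal) (d : ℝ) (g : Polynomial A) : EReal :=
  ⨅ i : ℕ, (ν (g.coeff i) - (((i : ℝ) * d : ℝ) : EReal))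

/-- The induced pseudovaluation on the localization `A_f`: the quotient of `polyPV ν d`
under the map `A[X] → A_f`, `X ↦ f⁻¹`. -/
def locPV {A : Type*} [CommRing A] (ν : A → EReal) (f : A) (d : ℝ)
    (z : Localization.Away f) : EReal :=
  ⨆ (g : Polynomial A)
    (_ : Polynomial.aeval (IsLocalization.Away.invSelf (S := Localization.Away f) f) g = z),
    polyPV ν d g

/-- The Gauss norm `γ_ε(α) = inf_i { i + ε p^{-i} ν(a_i) }` of a Witt vector. -/
def gaussNorm (p : ℕ) {A : Type*} [CommRing A] (ν : A → EReal) (ε : ℝ)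
    (α : WittVector p A) : EReal :=
  ⨅ i : ℕ, ((i : EReal) + ((ε * (p : ℝ) ^ (-(i : ℤ)) : ℝ) : EReal) * ν (α.coeff i))

/-- A Witt vector is overconvergent if `γ_ε(α) ≠ -∞` for some `ε > 0`. -/
def IsOverconvergent (p : ℕ) {A : Type*} [CommRing A] (ν : A → EReal)
    (α : WittVector p A) : Prop :=
  ∃ ε : ℝ, 0 < ε ∧ gaussNorm p ν ε α ≠ ⊥

/-- The trivial valuation on an integral domain: `ν 0 = ∞` and `ν a = 0` for `a ≠ 0`. -/
def trivialPV (K : Type*) [Zero K] : K → EReal :=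
  fun a => if a = 0 then (⊤ : EReal) else 0


open WittVector MvPolynomial Finset

namespace St17Aux

section Part1


variable (p : ℕ) [hp : Fact p.Prime]

/-- weight of a monomial: variable `(b, k)` has weight `p ^ k`. -/
def mwt (m : (Fin 2 × ℕ) →₀ ℕ) : ℕ := m.sum fun v e => e * p ^ v.2

omit hp in
lemma mwt_add (m₁ m₂ : (Fin 2 × ℕ) →₀ ℕ) : mwt p (m₁ + m₂) = mwt p m₁ + mwt p m₂ := by
  classical
  exact Finsupp.sum_add_index (by intro a _; simp) (by intro a _ e₁ e₂; ring)

omit hp in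
lemma mwt_single (v : Fin 2 × ℕ) (e : ℕ) : mwt p (Finsupp.single v e) = e * p ^ v.2 := by
  classical
  simp [mwt, Finsupp.sum_single_index]

/-- all monomials of `f` have weight at most `W`. -/
def WB (W : ℕ) (f : MvPolynomial (Fin 2 × ℕ) ℤ) : Prop :=
  ∀ m ∈ f.support, mwt p m ≤ W

omit hp in
lemma WB_zero (W : ℕ) : WB p W 0 := by intro m hm; simp at hm

omit hp in
lemma WB_C (W : ℕ) (c : ℤ) : WB p W (C c) := by
  classical
  intro m hm
  rw [MvPolynomial.mem_support_iff, MvPolynomial.coeff_C] at hm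
  split_ifs at hm with h
  · rw [← h]; simp [mwt]
  · simp at hm

omit hp in
lemma WB_add {W : ℕ} {f g : MvPolynomial (Fin 2 × ℕ) ℤ} (hf : WB p W f) (hg : WB p W g) :
    WB p W (f + g) := by
  classical
  intro m hm
  rcases Finset.mem_union.mp (MvPolynomial.support_add hm) with h | h
  · exact hf m h
  · exact hg m h

omit hp in
lemma WB_neg {W : ℕ} {f : MvPolynomial (Fin 2 × ℕ) ℤ} (hf : WB p W f) : WB p W (-f) := by
  intro m hm
  rw [MvPolynomial.support_neg] at hm
  exact hf m hm

omit hp in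
lemma WB_sub {W : ℕ} {f g : MvPolynomial (Fin 2 × ℕ) ℤ} (hf : WB p W f) (hg : WB p W g) :
    WB p W (f - g) := by
  rw [sub_eq_add_neg]; exact WB_add p hf (WB_neg p hg)

omit hp in
lemma WB_mul {V W : ℕ} {f g : MvPolynomial (Fin 2 × ℕ) ℤ} (hf : WB p V f) (hg : WB p W g) :
    WB p (V + W) (f * g) := by
  classical
  intro m hm
  have := MvPolynomial.support_mul f g hm
  rcases Finset.mem_add.mp this with ⟨m₁, h₁, m₂, h₂, rfl⟩
  rw [mwt_add]
  exact add_le_add (hf m₁ h₁) (hg m₂ h₂)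

omit hp in
lemma WB_pow {W : ℕ} {f : MvPolynomial (Fin 2 × ℕ) ℤ} (hf : WB p W f) (k : ℕ) :
    WB p (k * W) (f ^ k) := by
  induction k with
  | zero => simpa using WB_C p 0 1
  | succ k ih =>
      rw [pow_succ, Nat.succ_mul]
      exact WB_mul p ih hf

omit hp in
lemma WB_X (v : Fin 2 × ℕ) : WB p (p ^ v.2) (X v) := by
  classical
  intro m hm
  rw [MvPolynomial.support_X] at hm
  simp only [Finset.mem_singleton] at hm
  subst hm
  simp [mwt_single]

omit hp in
lemma WB_mono {V W : ℕ} (hVW : V ≤ W) {f : MvPolynomial (Fin 2 × ℕ) ℤ} (hf : WB p V f) :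
    WB p W f := fun m hm => le_trans (hf m hm) hVW

omit hp in
lemma WB_sum {W : ℕ} {ι : Type*} (s : Finset ι) (f : ι → MvPolynomial (Fin 2 × ℕ) ℤ)
    (h : ∀ i ∈ s, WB p W (f i)) : WB p W (∑ i ∈ s, f i) := by
  classical
  induction s using Finset.induction_on with
  | empty => simpa using WB_zero p W
  | insert _ _ hx ih =>
      rw [Finset.sum_insert hx]
      exact WB_add p (h _ (Finset.mem_insert_self _ _))
        (ih fun i hi => h i (Finset.mem_insert_of_mem hi))

lemma WB_rename_wittPolynomial (b : Fin 2) (n : ℕ) :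
    WB p (p ^ n) (rename (Prod.mk b) (wittPolynomial p ℤ n)) := by
  rw [wittPolynomial_eq_sum_C_mul_X_pow, map_sum]
  apply WB_sum
  intro i hi
  rw [Finset.mem_range] at hi
  simp only [map_mul, map_pow, rename_C, rename_X]
  rw [← C_pow]
  have h1 : WB p 0 (C ((p:ℤ) ^ i)) := WB_C p 0 _
  have h2 : WB p (p ^ (n - i) * p ^ i) ((X (b, i) : MvPolynomial (Fin 2 × ℕ) ℤ) ^ p ^ (n - i)) :=
    WB_pow p (WB_X p (b, i)) _
  have := WB_mul p h1 h2
  rw [zero_add] at this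
  apply WB_mono p _ this
  rw [← pow_add]
  rw [Nat.sub_add_cancel (Nat.le_of_lt_succ hi)]

lemma bind₁_wittPolynomial_eq (M : ℕ → MvPolynomial (Fin 2 × ℕ) ℤ) (n : ℕ) :
    bind₁ M (wittPolynomial p ℤ n) =
      ∑ i ∈ range (n + 1), C ((p:ℤ) ^ i) * (M i) ^ p ^ (n - i) := by
  rw [wittPolynomial_eq_sum_C_mul_X_pow, map_sum]
  apply Finset.sum_congr rfl
  intro i _
  simp only [map_mul, map_pow, bind₁_X_right, algHom_C]
  rw [show (algebraMap ℤ (MvPolynomial (Fin 2 × ℕ) ℤ)) (p:ℤ) = C (p:ℤ) from rfl, ← C_pow]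

/-- Key weight estimate for Witt structure polynomials attached to a `Φ`
whose associated ghost expressions have bounded weight. -/
lemma WB_wittStructureInt (Φ : MvPolynomial (Fin 2) ℤ)
    (hΦ : ∀ n, WB p (p ^ n) (bind₁ (fun i => rename (Prod.mk i) (wittPolynomial p ℤ n)) Φ)) :
    ∀ n, WB p (p ^ n) (wittStructureInt p Φ n) := by
  intro n
  induction n using Nat.strong_induction_on with
  | _ n IH =>
    have key := wittStructureInt_prop p Φ n
    rw [bind₁_wittPolynomial_eq, Finset.sum_range_succ, Nat.sub_self, pow_zero, pow_one]
      at key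
    -- key : ∑_{i<n} C(p^i) * M_i ^ (p^(n-i)) + C (p^n) * M_n = RHS
    have hMn : C ((p:ℤ) ^ n) * wittStructureInt p Φ n =
        bind₁ (fun i => rename (Prod.mk i) (wittPolynomial p ℤ n)) Φ -
          ∑ i ∈ range n, C ((p:ℤ) ^ i) * (wittStructureInt p Φ i) ^ p ^ (n - i) := by
      rw [← key]; ring
    have hWB : WB p (p ^ n) (C ((p:ℤ) ^ n) * wittStructureInt p Φ n) := by
      rw [hMn]
      apply WB_sub p (hΦ n)
      apply WB_sum
      intro i hi
      rw [Finset.mem_range] at hi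
      have h2 := WB_pow p (IH i hi) (p ^ (n - i))
      have := WB_mul p (WB_C p 0 ((p:ℤ) ^ i)) h2
      rw [zero_add] at this
      apply WB_mono p _ this
      rw [← pow_add, Nat.sub_add_cancel (le_of_lt hi)]
    intro m hm
    apply hWB m
    rw [MvPolynomial.mem_support_iff] at hm ⊢
    rw [MvPolynomial.coeff_C_mul]
    exact mul_ne_zero (pow_ne_zero _ (by exact_mod_cast hp.out.ne_zero)) hm

lemma WB_wittAdd (n : ℕ) : WB p (p ^ n) (wittAdd p n) := by
  have := WB_wittStructureInt p (X 0 + X 1) ?_ n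
  · exact this
  · intro k
    rw [map_add, bind₁_X_right, bind₁_X_right]
    exact WB_add p (WB_rename_wittPolynomial p 0 k) (WB_rename_wittPolynomial p 1 k)

lemma WB_wittSub (n : ℕ) : WB p (p ^ n) (wittSub p n) := by
  have := WB_wittStructureInt p (X 0 - X 1) ?_ n
  · exact this
  · intro k
    rw [map_sub, bind₁_X_right, bind₁_X_right]
    exact WB_sub p (WB_rename_wittPolynomial p 0 k) (WB_rename_wittPolynomial p 1 k)


end Part1

section Part2


variable {A : Type*} [CommRing A] {ν : A → EReal}
  (hν : IsPseudovaluation ν) (hproper : ∀ a : A, ν a ≠ ⊥)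

section NuLemmas
include hν

lemma nu_neg (a : A) : ν a ≤ ν (-a) := by
  have := hν.min_le_sub 0 a
  rw [zero_sub, hν.map_zero] at this
  simpa using this

lemma nu_min_le_add (a b : A) : min (ν a) (ν b) ≤ ν (a + b) := by
  have h1 := hν.min_le_sub a (-b)
  rw [sub_neg_eq_add] at h1
  exact le_trans (le_min (min_le_left _ _) (le_trans (min_le_right _ _) (nu_neg hν b))) h1

lemma nu_nat_nonneg (n : ℕ) : (0 : EReal) ≤ ν (n : A) := by
  induction n with
  | zero => simp [hν.map_zero]
  | succ n ih =>
      have : ((n+1 : ℕ) : A) = (n : A) + 1 := by push_cast; ring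
      rw [this]
      have := nu_min_le_add hν (n : A) 1
      rw [hν.map_one] at this
      exact le_trans (le_min ih le_rfl) this

lemma nu_int_nonneg (k : ℤ) : (0 : EReal) ≤ ν (k : A) := by
  obtain ⟨n, rfl | rfl⟩ := Int.eq_nat_or_neg k
  · push_cast; exact nu_nat_nonneg hν _
  · push_cast
    exact le_trans (nu_nat_nonneg hν n) (nu_neg hν _)

lemma nu_sum_ge {ι : Type*} (s : Finset ι) (f : ι → A) (B : EReal)
    (h : ∀ i ∈ s, B ≤ ν (f i)) : B ≤ ν (∑ i ∈ s, f i) := by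
  classical
  induction s using Finset.induction_on with
  | empty => simp [hν.map_zero]
  | insert _ _ hx ih =>
      rename_i a s' _
      rw [Finset.sum_insert hx]
      refine le_trans ?_ (nu_min_le_add hν _ _)
      exact le_min (h _ (Finset.mem_insert_self _ _))
        (ih fun i hi => h i (Finset.mem_insert_of_mem hi))

include hproper

lemma nu_mul_ge (a b : A) {B B' : EReal} (ha : B ≤ ν a) (hb : B' ≤ ν b) :
    B + B' ≤ ν (a * b) :=
  le_trans (add_le_add ha hb) (hν.add_le_mul a b (hproper a) (hproper b))

lemma nu_pow_ge {b : ℝ} {z : A} (hb : (b : EReal) ≤ ν z) (k : ℕ) :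
    (((k : ℝ) * b : ℝ) : EReal) ≤ ν (z ^ k) := by
  induction k with
  | zero => simp [hν.map_one]
  | succ k ih =>
      have h2 : (((k+1:ℕ):ℝ) * b : ℝ) = b + ((k:ℕ):ℝ)*b := by push_cast; ring
      rw [pow_succ, mul_comm (z ^ k) z, h2, EReal.coe_add]
      exact nu_mul_ge hν hproper _ _ hb ih

lemma nu_int_mul_ge (c : ℤ) (z : A) {B : EReal} (hz : B ≤ ν z) : B ≤ ν ((c : A) * z) := by
  have := nu_mul_ge hν hproper (c : A) z (nu_int_nonneg hν c) hz
  rwa [zero_add] at this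

end NuLemmas

/-- EReal helper: multiply a lower bound by a positive real constant. -/
lemma ereal_mul_bound {r b : ℝ} (hr : 0 < r) {x : EReal} (hx : (b : EReal) ≤ x) :
    ((r * b : ℝ) : EReal) ≤ (r : EReal) * x := by
  induction x using EReal.rec with
  | bot => exact absurd hx (by simp)
  | coe q =>
      rw [← EReal.coe_mul, EReal.coe_le_coe_iff]
      exact mul_le_mul_of_nonneg_left (EReal.coe_le_coe_iff.mp hx) hr.le
  | top => rw [EReal.coe_mul_top_of_pos hr]; exact le_top

/-- EReal helper: divide out a positive real constant from a shifted bound. -/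
lemma ereal_div_bound {r L : ℝ} (hr : 0 < r) {x : EReal} (hx : x ≠ ⊥) (i : ℕ)
    (h : (L : EReal) ≤ (i : EReal) + (r : EReal) * x) :
    (((L - i) / r : ℝ) : EReal) ≤ x := by
  induction x using EReal.rec with
  | bot => exact absurd rfl hx
  | coe q =>
      rw [show ((i : EReal) + (r : EReal) * (q : EReal)) = (((i : ℝ) + r * q : ℝ) : EReal)
        by rw [EReal.coe_add, EReal.coe_mul]; norm_cast] at h
      rw [EReal.coe_le_coe_iff] at h ⊢
      rw [div_le_iff₀ hr]
      linarith
  | top => exact le_top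


end Part2

section Part3

variable (p : ℕ) [hp : Fact p.Prime] {A : Type*} [CommRing A] {ν : A → EReal}

/-- the lower bound `-(C+n)p^n/ε` for the valuation of the `n`-th coefficient. -/
def bnd (ε C : ℝ) (n : ℕ) : ℝ := -((C + n) * (p:ℝ) ^ n) / ε

/-- `x` belongs to the `(ε, C)`-ball of overconvergent Witt vectors. -/
def memS (ν : A → EReal) (ε C : ℝ) (x : WittVector p A) : Prop :=
  ∀ n : ℕ, ((bnd p ε C n : ℝ) : EReal) ≤ ν (x.coeff n)

variable (hν : IsPseudovaluation ν) (hproper : ∀ a : A, ν a ≠ ⊥)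

include hν hproper

lemma nu_prod_ge {ε : ℝ} (cf : Fin 2 → ℝ) {g : Fin 2 × ℕ → A}
    (hg : ∀ v : Fin 2 × ℕ, ((bnd p ε (cf v.1) v.2 : ℝ) : EReal) ≤ ν (g v))
    (mexp : Fin 2 × ℕ → ℕ) (s : Finset (Fin 2 × ℕ)) :
    (((∑ i ∈ s, (mexp i : ℝ) * bnd p ε (cf i.1) i.2 : ℝ)) : EReal) ≤
      ν (∏ i ∈ s, g i ^ mexp i) := by
  classical
  induction s using Finset.induction_on with
  | empty => simp [hν.map_one]
  | @insert a s' hx ih =>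
      rw [Finset.prod_insert hx, Finset.sum_insert hx, EReal.coe_add]
      exact nu_mul_ge hν hproper _ _ (nu_pow_ge hν hproper (hg a) (mexp a)) ih

lemma peval_bound {ε C D E : ℝ} (hε : 0 < ε)
    (hCE : C ≤ E) (hDE : D ≤ E) (hE : 0 ≤ E) (n : ℕ)
    {φ : MvPolynomial (Fin 2 × ℕ) ℤ} (hφ : WB p (p ^ n) φ) {xc yc : ℕ → A}
    (hx : ∀ k, ((bnd p ε C k : ℝ) : EReal) ≤ ν (xc k))
    (hy : ∀ k, ((bnd p ε D k : ℝ) : EReal) ≤ ν (yc k)) :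
    ((bnd p ε E n : ℝ) : EReal) ≤ ν (peval φ ![xc, yc]) := by
  classical
  have hp1 : (1:ℕ) < p := hp.out.one_lt
  have hppos : (0:ℝ) < (p:ℝ) := by positivity
  set cf : Fin 2 → ℝ := ![C, D] with hcf
  set g : Fin 2 × ℕ → A := Function.uncurry ![xc, yc] with hgdef
  have hg : ∀ v : Fin 2 × ℕ, ((bnd p ε (cf v.1) v.2 : ℝ) : EReal) ≤ ν (g v) := by
    rintro ⟨b, k⟩
    refine Fin.cases ?_ ?_ b
    · simpa [hgdef, hcf, Function.uncurry] using hx k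
    · intro i
      have : i = 0 := Subsingleton.elim _ _
      subst this
      simpa [hgdef, hcf, Function.uncurry] using hy k
  have hcfE : ∀ b : Fin 2, cf b ≤ E := by
    intro b
    refine Fin.cases (by simpa [hcf] using hCE) (fun i => ?_) b
    have : i = 0 := Subsingleton.elim _ _
    subst this
    simpa [hcf] using hDE
  rw [show peval φ ![xc, yc] = aeval g φ from rfl, aeval_def, eval₂_eq]
  apply nu_sum_ge hν
  intro m hm
  have hwm : mwt p m ≤ p ^ n := hφ m hm
  -- variables appearing have level ≤ n
  have hk : ∀ i ∈ m.support, i.2 ≤ n := by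
    intro i hi
    have h1 : p ^ i.2 ≤ mwt p m := by
      have : m i * p ^ i.2 ≤ mwt p m := by
        refine Finset.single_le_sum (f := fun j => m j * p ^ j.2) ?_ hi
        intro j _; positivity
      calc p ^ i.2 = 1 * p ^ i.2 := (one_mul _).symm
        _ ≤ m i * p ^ i.2 := by
            have := Finsupp.mem_support_iff.mp hi
            exact Nat.mul_le_mul_right _ (Nat.one_le_iff_ne_zero.mpr this)
        _ ≤ mwt p m := this
    exact (Nat.pow_le_pow_iff_right hp1).mp (le_trans h1 hwm)
  have hterm : ((bnd p ε E n : ℝ) : EReal) ≤ ν (∏ i ∈ m.support, g i ^ m i) := by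
    refine le_trans ?_ (nu_prod_ge p hν hproper cf hg m m.support)
    rw [EReal.coe_le_coe_iff]
    have hmwt : (mwt p m : ℝ) = ∑ i ∈ m.support, (m i : ℝ) * (p:ℝ) ^ i.2 := by
      rw [show mwt p m = ∑ i ∈ m.support, m i * p ^ i.2 from rfl]
      push_cast
      ring
    have step1 : ∑ i ∈ m.support, (m i : ℝ) * (-(E + n) * (p:ℝ) ^ i.2 / ε) ≤
        ∑ i ∈ m.support, (m i : ℝ) * bnd p ε (cf i.1) i.2 := by
      refine Finset.sum_le_sum ?_
      intro i hi
      have h2 : cf i.1 + (i.2 : ℝ) ≤ E + n := by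
        have := hcfE i.1
        have h3 : (i.2 : ℝ) ≤ (n : ℝ) := by exact_mod_cast hk i hi
        linarith
      refine mul_le_mul_of_nonneg_left ?_ (by positivity)
      rw [bnd, div_le_div_iff_of_pos_right hε]
      have hpp : (0:ℝ) ≤ (p:ℝ) ^ i.2 := by positivity
      nlinarith
    refine le_trans ?_ step1
    have step2 : ∑ i ∈ m.support, (m i : ℝ) * (-(E + n) * (p:ℝ) ^ i.2 / ε) =
        (-(E + n) / ε) * (mwt p m : ℝ) := by
      rw [hmwt, Finset.mul_sum]
      refine Finset.sum_congr rfl fun i _ => by ring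
    rw [step2, bnd]
    have h4 : (mwt p m : ℝ) ≤ (p:ℝ) ^ n := by
      rw [show ((p:ℝ) ^ n) = ((p ^ n : ℕ) : ℝ) by push_cast; ring]
      exact_mod_cast hwm
    have h5 : (-(E + (n:ℝ)) / ε) ≤ 0 := by
      rw [neg_div]
      exact neg_nonpos.mpr (div_nonneg (by positivity) hε.le)
    calc -((E + ↑n) * (p:ℝ) ^ n) / ε = (-(E + n) / ε) * (p:ℝ)^n := by ring
      _ ≤ (-(E + n) / ε) * (mwt p m : ℝ) := by
          exact mul_le_mul_of_nonpos_left h4 h5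
  -- now the integer coefficient
  refine le_trans hterm ?_
  have := nu_int_mul_ge hν hproper (MvPolynomial.coeff m φ)
      (∏ i ∈ m.support, g i ^ m i) (le_refl (ν (∏ i ∈ m.support, g i ^ m i)))
  simpa using this

end Part3

section Part4

variable (p : ℕ) [hp : Fact p.Prime] {A : Type*} [CommRing A] {ν : A → EReal}

lemma bnd_mono {ε ε' C C' : ℝ} (hε' : 0 < ε') (hεε : ε' ≤ ε) (hC : 0 ≤ C) (hCC : C ≤ C')
    (n : ℕ) : bnd p ε' C' n ≤ bnd p ε C n := by
  have hε : 0 < ε := lt_of_lt_of_le hε' hεε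
  rw [bnd, bnd, neg_div, neg_div]
  apply neg_le_neg
  apply div_le_div₀ (mul_nonneg (by linarith) (by positivity)) ?_ hε' hεε
  exact mul_le_mul_of_nonneg_right (by linarith) (by positivity)

lemma bnd_nonpos {ε C : ℝ} (hε : 0 < ε) (hC : 0 ≤ C) (n : ℕ) : bnd p ε C n ≤ 0 := by
  rw [bnd, neg_div]
  refine neg_nonpos.mpr (div_nonneg (by positivity) hε.le)

variable (hν : IsPseudovaluation ν) (hproper : ∀ a : A, ν a ≠ ⊥)

include hν hproper

lemma memS_mono {ε ε' C C' : ℝ} (hε' : 0 < ε') (hεε : ε' ≤ ε) (hC : 0 ≤ C) (hCC : C ≤ C')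
    {x : WittVector p A} (hx : memS p ν ε C x) : memS p ν ε' C' x := by
  intro n
  refine le_trans ?_ (hx n)
  exact EReal.coe_le_coe_iff.mpr (bnd_mono p hε' hεε hC hCC n)

lemma memS_zero (ε C : ℝ) : memS p ν ε C (0 : WittVector p A) := by
  intro n
  rw [WittVector.zero_coeff, hν.map_zero]
  exact le_top

lemma memS_add {ε C : ℝ} (hε : 0 < ε) (hC : 0 ≤ C) {x y : WittVector p A}
    (hx : memS p ν ε C x) (hy : memS p ν ε C y) : memS p ν ε C (x + y) := by
  intro n
  rw [WittVector.add_coeff]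
  exact peval_bound p hν hproper hε le_rfl le_rfl hC n (WB_wittAdd p n) hx hy

lemma memS_sub {ε C : ℝ} (hε : 0 < ε) (hC : 0 ≤ C) {x y : WittVector p A}
    (hx : memS p ν ε C x) (hy : memS p ν ε C y) : memS p ν ε C (x - y) := by
  intro n
  rw [WittVector.sub_coeff]
  exact peval_bound p hν hproper hε le_rfl le_rfl hC n (WB_wittSub p n) hx hy

lemma memS_sum {ε C : ℝ} (hε : 0 < ε) (hC : 0 ≤ C) {ι : Type*} (s : Finset ι)
    (f : ι → WittVector p A) (h : ∀ i ∈ s, memS p ν ε C (f i)) :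
    memS p ν ε C (∑ i ∈ s, f i) := by
  classical
  induction s using Finset.induction_on with
  | empty => simpa using memS_zero p hν hproper ε C
  | @insert a s' hx ih =>
      rw [Finset.sum_insert hx]
      exact memS_add p hν hproper hε hC (h _ (Finset.mem_insert_self _ _))
        (ih fun i hi => h i (Finset.mem_insert_of_mem hi))

omit hν hproper in
lemma coeff_iterate_vsh_lt {x : WittVector p A} {k j : ℕ} (h : j < k) :
    ((verschiebung^[k]) x).coeff j = 0 := by
  induction k generalizing j with
  | zero => omega
  | succ k ih =>
      rw [Function.iterate_succ_apply']
      cases j with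
      | zero => exact verschiebung_coeff_zero _
      | succ j =>
          rw [verschiebung_coeff_succ]
          exact ih (by omega)

omit hν hproper in
lemma coeff_iterate_vsh_teich (z : A) (k j : ℕ) :
    ((verschiebung^[k]) (teichmuller p z)).coeff j = if j = k then z else 0 := by
  rcases lt_trichotomy j k with h | h | h
  · rw [coeff_iterate_vsh_lt p h, if_neg (by omega)]
  · subst h
    have h0 := iterate_verschiebung_coeff (teichmuller p z) j 0
    rw [zero_add] at h0
    rw [h0, teichmuller_coeff_zero, if_pos rfl]
  · obtain ⟨m, rfl⟩ : ∃ m, j = m + k := ⟨j - k, by omega⟩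
    rw [iterate_verschiebung_coeff, if_neg (by omega)]
    exact teichmuller_coeff_pos p z m (by omega)

lemma memS_vsh_teich {ε C : ℝ} (hε : 0 < ε) (hC : 0 ≤ C) (k : ℕ) {z : A}
    (hz : ((bnd p ε C k : ℝ) : EReal) ≤ ν z) :
    memS p ν ε C ((verschiebung^[k]) (teichmuller p z)) := by
  intro n
  rw [coeff_iterate_vsh_teich]
  split_ifs with h
  · subst h; exact hz
  · rw [hν.map_zero]; exact le_top

lemma memS_one {ε C : ℝ} (hε : 0 < ε) (hC : 0 ≤ C) : memS p ν ε C (1 : WittVector p A) := by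
  intro n
  cases n with
  | zero =>
      rw [WittVector.one_coeff_zero, hν.map_one]
      exact EReal.coe_le_coe_iff.mpr (bnd_nonpos p hε hC 0)
  | succ n =>
      rw [WittVector.one_coeff_eq_of_pos p A _ (Nat.succ_pos n), hν.map_zero]
      exact le_top

lemma memS_teichmuller {ε C : ℝ} (hε : 0 < ε) (hC : 0 ≤ C) {z : A}
    (hz : ((bnd p ε C 0 : ℝ) : EReal) ≤ ν z) : memS p ν ε C (teichmuller p z) := by
  have := memS_vsh_teich p hν hproper hε hC 0 hz
  simpa using this

omit hν hproper in
lemma init_coeff (x : WittVector p A) (N j : ℕ) :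
    (init N x).coeff j = if j < N then x.coeff j else 0 := by
  simp [init, WittVector.select, WittVector.coeff_mk]

omit hν hproper in
lemma sumVT_coeff (x : WittVector p A) (n : ℕ) (j : ℕ) :
    (∑ i ∈ range (n+1), (verschiebung^[i]) (teichmuller p (x.coeff i))).coeff j =
      if j ≤ n then x.coeff j else 0 := by
  induction n generalizing j with
  | zero =>
      rw [Finset.sum_range_one, Function.iterate_zero_apply]
      cases j with
      | zero => rw [teichmuller_coeff_zero, if_pos (le_refl 0)]
      | succ j =>
          rw [teichmuller_coeff_pos p _ (j+1) (Nat.succ_pos j), if_neg (by omega)]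
  | succ n ih =>
      rw [Finset.sum_range_succ]
      rw [coeff_add_of_disjoint]
      · rw [ih, coeff_iterate_vsh_teich]
        by_cases h1 : j ≤ n
        · rw [if_pos h1, if_neg (show ¬j = n+1 by omega), if_pos (show j ≤ n+1 by omega),
            add_zero]
        · by_cases h2 : j = n+1
          · rw [if_neg h1, if_pos h2, if_pos (show j ≤ n+1 by omega), zero_add, h2]
          · rw [if_neg h1, if_neg h2, if_neg (show ¬j ≤ n+1 by omega), add_zero]
      · intro m
        by_cases hm : m ≤ n
        · right
          rw [coeff_iterate_vsh_teich, if_neg (by omega)]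
        · left
          rw [ih, if_neg hm]

omit hν hproper in
lemma init_eq_sumVT (x : WittVector p A) (n : ℕ) :
    init (n+1) x = ∑ i ∈ range (n+1), (verschiebung^[i]) (teichmuller p (x.coeff i)) := by
  apply WittVector.ext
  intro j
  rw [init_coeff, sumVT_coeff]
  simp [Nat.lt_succ_iff]

omit hν hproper in
lemma mul_coeff_eq_sum (x y : WittVector p A) (n : ℕ) :
    (x * y).coeff n =
      ((∑ i ∈ range (n+1), (verschiebung^[i]) (teichmuller p (x.coeff i))) *
       (∑ i ∈ range (n+1), (verschiebung^[i]) (teichmuller p (y.coeff i)))).coeff n := by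
  have h1 : (x*y).coeff n = (init (n+1) (x*y)).coeff n := by
    rw [init_coeff, if_pos (Nat.lt_succ_self n)]
  have h2 := init_mul x y (n+1)
  have h3 : (init (n+1) (init (n+1) x * init (n+1) y)).coeff n =
      (init (n+1) x * init (n+1) y).coeff n := by
    rw [init_coeff, if_pos (Nat.lt_succ_self n)]
  rw [h1, h2, h3, init_eq_sumVT, init_eq_sumVT]

omit hν hproper in
lemma frob_iter_teich [CharP A p] (z : A) (j : ℕ) :
    (WittVector.frobenius^[j]) (teichmuller p z) = teichmuller p (z ^ p ^ j) := by
  apply WittVector.ext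
  intro k
  rw [iterate_frobenius_coeff]
  cases k with
  | zero => rw [teichmuller_coeff_zero, teichmuller_coeff_zero]
  | succ k =>
      rw [teichmuller_coeff_pos p z (k+1) (Nat.succ_pos k),
        teichmuller_coeff_pos p _ (k+1) (Nat.succ_pos k)]
      exact zero_pow (pow_ne_zero _ hp.out.ne_zero)

lemma memS_mul [CharP A p] {ε C D : ℝ} (hε : 0 < ε) (hC : 0 ≤ C) (hD : 0 ≤ D)
    {x y : WittVector p A} (hx : memS p ν ε C x) (hy : memS p ν ε D y) :
    memS p ν ε (C + D) (x * y) := by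
  intro n
  rw [mul_coeff_eq_sum, Finset.sum_mul_sum]
  have hterm : ∀ i ∈ range (n+1), ∀ j ∈ range (n+1),
      (verschiebung^[i]) (teichmuller p (x.coeff i)) *
        (verschiebung^[j]) (teichmuller p (y.coeff j)) =
      (verschiebung^[i+j]) (teichmuller p (x.coeff i ^ p ^ j * y.coeff j ^ p ^ i)) := by
    intro i _ j _
    rw [iterate_verschiebung_mul, frob_iter_teich, frob_iter_teich, ← map_mul]
  have hsum : memS p ν ε (C + D)
      (∑ i ∈ range (n+1), ∑ j ∈ range (n+1),
        (verschiebung^[i]) (teichmuller p (x.coeff i)) *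
          (verschiebung^[j]) (teichmuller p (y.coeff j))) := by
    apply memS_sum p hν hproper hε (by positivity)
    intro i hi
    apply memS_sum p hν hproper hε (by positivity)
    intro j hj
    rw [hterm i hi j hj]
    apply memS_vsh_teich p hν hproper hε (by positivity)
    have hxc := nu_pow_ge hν hproper (hx i) (p ^ j)
    have hyc := nu_pow_ge hν hproper (hy j) (p ^ i)
    have := nu_mul_ge hν hproper _ _ hxc hyc
    rw [← EReal.coe_add] at this
    have heq : bnd p ε (C+D) (i+j) = ((p ^ j : ℕ) : ℝ) * bnd p ε C i +
        ((p ^ i : ℕ) : ℝ) * bnd p ε D j := by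
      rw [bnd, bnd, bnd]
      push_cast
      field_simp
      ring
    rw [heq]
    exact this
  exact hsum n

lemma memS_pow [CharP A p] {ε : ℝ} (hε : 0 < ε) {x : WittVector p A}
    (hx : memS p ν ε 0 x) (k : ℕ) : memS p ν ε 0 (x ^ k) := by
  induction k with
  | zero => simpa using memS_one p hν hproper hε le_rfl
  | succ k ih =>
      rw [pow_succ]
      have := memS_mul p hν hproper hε le_rfl le_rfl ih hx
      simpa using this

end Part4

section Part5

variable (p : ℕ) [hp : Fact p.Prime] {A : Type*} [CommRing A] {ν : A → EReal}

lemma memS_le_gaussNorm {ε C : ℝ} (hε : 0 < ε) (hC : 0 ≤ C) {x : WittVector p A}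
    (hx : memS p ν ε C x) : ((-C : ℝ) : EReal) ≤ gaussNorm p ν ε x := by
  apply le_iInf
  intro i
  have hppos : (0:ℝ) < (p:ℝ) := by exact_mod_cast hp.out.pos
  have hc : 0 < ε * (p:ℝ) ^ (-(i:ℤ)) := by positivity
  have h1 := ereal_mul_bound hc (hx i)
  have h2 : ε * (p:ℝ) ^ (-(i:ℤ)) * bnd p ε C i = -C - i := by
    rw [bnd, zpow_neg, zpow_natCast]
    field_simp
    ring
  have h3 : ((-C - i : ℝ) : EReal) ≤ ((ε * (p:ℝ) ^ (-(i:ℤ)) : ℝ) : EReal) * ν (x.coeff i) := by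
    rw [← h2]; exact h1
  have h5 : ((-C:ℝ) : EReal) = (((i:ℕ):ℝ) : EReal) + ((-C - i : ℝ) : EReal) := by
    rw [← EReal.coe_add]
    norm_num
  have h6 : (((i:ℕ):ℝ) : EReal) = ((i:ℕ) : EReal) := rfl
  rw [h5, h6]
  exact add_le_add_right h3 _

lemma memS_isOverconvergent {ε C : ℝ} (hε : 0 < ε) (hC : 0 ≤ C) {x : WittVector p A}
    (hx : memS p ν ε C x) : IsOverconvergent p ν x := by
  refine ⟨ε, hε, fun hbot => ?_⟩
  have := memS_le_gaussNorm p hε hC hx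
  rw [hbot, le_bot_iff] at this
  exact EReal.coe_ne_bot _ this

lemma term_top {c : ℝ} (hc : 0 < c) {i : ℕ} {x : EReal} (hx : x ≠ ⊥)
    (h : (i : EReal) + (c : EReal) * x = ⊤) : x = ⊤ := by
  induction x using EReal.rec with
  | bot => exact absurd rfl hx
  | coe q =>
      exfalso
      rw [show ((i : EReal) + (c : EReal) * (q : EReal)) = (((i : ℝ) + c * q : ℝ) : EReal) by
        rw [EReal.coe_add, EReal.coe_mul]; norm_cast] at h
      exact EReal.coe_ne_top _ h
  | top => rfl

lemma isOverconvergent_memS (hproper : ∀ a : A, ν a ≠ ⊥) {x : WittVector p A}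
    (h : IsOverconvergent p ν x) : ∃ ε C : ℝ, 0 < ε ∧ 0 ≤ C ∧ memS p ν ε C x := by
  obtain ⟨ε, hε, hne⟩ := h
  have hppos : (0:ℝ) < (p:ℝ) := by exact_mod_cast hp.out.pos
  by_cases htop : gaussNorm p ν ε x = ⊤
  · refine ⟨ε, 0, hε, le_rfl, ?_⟩
    intro i
    have hc : 0 < ε * (p:ℝ) ^ (-(i:ℤ)) := by positivity
    have hterm := iInf_eq_top.mp htop i
    have := term_top hc (hproper _) hterm
    rw [this]
    exact le_top
  · set γ := gaussNorm p ν ε x with hγ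
    set L := min γ.toReal 0 with hLdef
    have hL0 : L ≤ 0 := min_le_right _ _
    have hLle : (L : EReal) ≤ γ := by
      refine le_trans (EReal.coe_le_coe_iff.mpr (min_le_left _ _)) ?_
      rw [EReal.coe_toReal htop hne]
    refine ⟨ε, -L, hε, by linarith, ?_⟩
    intro i
    have hc : 0 < ε * (p:ℝ) ^ (-(i:ℤ)) := by positivity
    have hterm : (L : EReal) ≤ (i:EReal) +
        ((ε * (p:ℝ)^(-(i:ℤ)) : ℝ):EReal) * ν (x.coeff i) :=
      le_trans hLle (iInf_le _ i)
    have hdiv := ereal_div_bound hc (hproper _) i hterm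
    refine le_trans (le_of_eq ?_) hdiv
    rw [EReal.coe_eq_coe_iff]
    rw [bnd, zpow_neg, zpow_natCast]
    have hpne : ((p:ℝ) ^ i) ≠ 0 := (pow_pos hppos i).ne'
    field_simp
    ring

end Part5

section Part6

variable (p : ℕ) [hp : Fact p.Prime] {A : Type*} [CommRing A] {ν : A → EReal}

lemma eq_iterate_vsh {z : WittVector p A} {k : ℕ} (hz : ∀ j, j < k → z.coeff j = 0) :
    z = (verschiebung^[k]) (WittVector.mk p fun i => z.coeff (i + k)) := by
  apply WittVector.ext
  intro j
  rcases lt_or_ge j k with h | h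
  · rw [coeff_iterate_vsh_lt p h, hz j h]
  · obtain ⟨m, rfl⟩ : ∃ m, j = m + k := ⟨j - k, by omega⟩
    rw [iterate_verschiebung_coeff, WittVector.coeff_mk]

lemma exists_pow_eq_vsh [CharP A p] {η : WittVector p A} (h0 : η.coeff 0 = 0) (k : ℕ) :
    ∃ w, η ^ k = (verschiebung^[k]) w := by
  have hη : η = verschiebung (WittVector.mk p fun i => η.coeff (i + 1)) := by
    have := eq_iterate_vsh p (z := η) (k := 1) (by
      intro j hj
      interval_cases j
      exact h0)
    simpa using this
  set η' := WittVector.mk p fun i => η.coeff (i + 1) with hη'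
  induction k with
  | zero => exact ⟨1, by simp⟩
  | succ k ih =>
      obtain ⟨w, hw⟩ := ih
      refine ⟨(WittVector.frobenius^[1]) w * (WittVector.frobenius^[k]) η', ?_⟩
      rw [pow_succ, hw, hη]
      rw [show verschiebung η' = (verschiebung^[1]) η' from rfl]
      rw [iterate_verschiebung_mul]

lemma coeff_pow_vanish [CharP A p] {η : WittVector p A} (h0 : η.coeff 0 = 0) (k j : ℕ)
    (hjk : j < k) : (η ^ k).coeff j = 0 := by
  obtain ⟨w, hw⟩ := exists_pow_eq_vsh p h0 k
  rw [hw]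
  exact coeff_iterate_vsh_lt p hjk

lemma iterate_vsh_neg (k : ℕ) (w : WittVector p A) :
    (verschiebung^[k]) (-w) = -((verschiebung^[k]) w) := by
  induction k with
  | zero => simp
  | succ k ih =>
      rw [Function.iterate_succ_apply', Function.iterate_succ_apply', ih, map_neg]

lemma add_coeff_eq_of_vanish {N : ℕ} (z w : WittVector p A)
    (hw : ∀ j, j < N → w.coeff j = 0) {j : ℕ} (hj : j < N) :
    (z + w).coeff j = z.coeff j := by
  have h1 : WittVector.truncate N w = 0 := by
    apply TruncatedWittVector.ext
    intro i
    rw [WittVector.coeff_truncate, TruncatedWittVector.coeff_zero]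
    exact hw i i.2
  have h2 : WittVector.truncate N (z + w) = WittVector.truncate N z := by
    rw [map_add, h1, add_zero]
  have h3 := congrArg (fun t => TruncatedWittVector.coeff (⟨j, hj⟩ : Fin N) t) h2
  simpa only [WittVector.coeff_truncate] using h3

lemma sum_coeff_vanish {N : ℕ} {ι : Type*} (s : Finset ι) (f : ι → WittVector p A)
    (h : ∀ i ∈ s, ∀ j, j < N → (f i).coeff j = 0) :
    ∀ j, j < N → (∑ i ∈ s, f i).coeff j = 0 := by
  classical
  induction s using Finset.induction_on with
  | empty => intro j hj; simp
  | @insert a s' hx ih =>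
      intro j hj
      rw [Finset.sum_insert hx, add_comm,
        add_coeff_eq_of_vanish p _ _ (h a (Finset.mem_insert_self _ _)) hj]
      exact ih (fun i hi => h i (Finset.mem_insert_of_mem hi)) j hj

variable (hν : IsPseudovaluation ν) (hproper : ∀ a : A, ν a ≠ ⊥)
include hν hproper

/-- The key construction: a normalized overconvergent Witt vector with constant
coefficient `1` has an overconvergent inverse (with the same parameters). -/
lemma inverse_normalized [CharP A p] {ε : ℝ} (hε : 0 < ε) {α : WittVector p A}
    (h0 : α.coeff 0 = 1) (hα : memS p ν ε 0 α) :
    ∃ β, α * β = 1 ∧ memS p ν ε 0 β := by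
  classical
  set η := 1 - α with hηdef
  have hα' : α = 1 - η := by rw [hηdef]; ring
  have hsum : α + η = 1 := by rw [hηdef]; ring
  have hη0 : η.coeff 0 = 0 := by
    have h1 := WittVector.add_coeff_zero α η
    rw [hsum, WittVector.one_coeff_zero, h0] at h1
    -- h1 : 1 = 1 + η.coeff 0
    have := h1.symm
    rwa [add_eq_left] at this
  have hηS : memS p ν ε 0 η :=
    memS_sub p hν hproper hε le_rfl (memS_one p hν hproper hε le_rfl) hα
  set T : ℕ → WittVector p A := fun n => ∑ k ∈ range (n+1), η ^ k with hTdef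
  have hTS : ∀ n, memS p ν ε 0 (T n) := by
    intro n
    exact memS_sum p hν hproper hε le_rfl _ _
      (fun k _ => memS_pow p hν hproper hε hηS k)
  set β := WittVector.mk p (fun n => (T n).coeff n) with hβdef
  have hstab : ∀ n j, j ≤ n → β.coeff j = (T n).coeff j := by
    intro n j hj
    have hβj : β.coeff j = (T j).coeff j := by
      rw [hβdef, WittVector.coeff_mk]
    have hsplit : T n = T j + ∑ k ∈ Finset.Ico (j+1) (n+1), η ^ k := by
      rw [hTdef]
      dsimp only
      rw [Finset.range_eq_Ico, ← Finset.sum_Ico_consecutive _ (by omega : 0 ≤ j + 1)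
        (by omega : j + 1 ≤ n + 1)]
      rw [Finset.range_eq_Ico]
    have hvan : ∀ j', j' < j + 1 → (∑ k ∈ Finset.Ico (j+1) (n+1), η ^ k).coeff j' = 0 := by
      apply sum_coeff_vanish
      intro k hk j' hj'
      rw [Finset.mem_Ico] at hk
      exact coeff_pow_vanish p hη0 k j' (by omega)
    rw [hβj, hsplit, add_coeff_eq_of_vanish p _ _ hvan (by omega : j < j + 1)]
  have hβS : memS p ν ε 0 β := by
    intro n
    rw [hβdef, WittVector.coeff_mk]
    exact hTS n n
  refine ⟨β, ?_, hβS⟩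
  apply WittVector.ext
  intro n
  -- replace β by T n in the product
  have hrepl : (α * β).coeff n = (α * T n).coeff n := by
    rw [mul_coeff_eq_sum p α β n, mul_coeff_eq_sum p α (T n) n]
    congr 2
    exact Finset.sum_congr rfl fun i hi => by
      rw [hstab n i (by rw [Finset.mem_range] at hi; omega)]
  have hgeom : α * T n = 1 - η ^ (n+1) := by
    have hg := geom_sum_mul η (n+1)
    rw [hα']
    rw [hTdef]
    dsimp only
    linear_combination -hg
  have hfin : (1 - η ^ (n+1)).coeff n = (1 : WittVector p A).coeff n := by
    rw [sub_eq_add_neg]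
    apply add_coeff_eq_of_vanish p _ _ ?_ (Nat.lt_succ_self n)
    intro j hj
    obtain ⟨w, hw⟩ := exists_pow_eq_vsh p hη0 (n+1)
    rw [hw, ← iterate_vsh_neg]
    exact coeff_iterate_vsh_lt p hj
  rw [hrepl, hgeom, hfin]

end Part6

section Part7

variable (p : ℕ) [hp : Fact p.Prime] {A : Type*} [CommRing A] {ν : A → EReal}

lemma exists_real_le {x : EReal} (h : x ≠ ⊥) : ∃ r : ℝ, (r:EReal) ≤ x := by
  induction x using EReal.rec with
  | bot => exact absurd rfl h
  | coe q => exact ⟨q, le_rfl⟩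
  | top => exact ⟨0, le_top⟩

lemma charP_of_cast_eq_zero [Nontrivial A] (hpA : (p : A) = 0) : CharP A p := by
  have h1 : ringChar A ∣ p := ringChar.dvd hpA
  rcases hp.out.eq_one_or_self_of_dvd _ h1 with h | h
  · exact absurd h CharP.ringChar_ne_one
  · rw [← h]; exact ringChar.charP A

variable (hν : IsPseudovaluation ν)

include hν in
lemma memS_normalize {ε C : ℝ} (hε : 0 < ε) (hC : 0 ≤ C) {x : WittVector p A}
    (h0 : x.coeff 0 = 1) (hx : memS p ν ε C x) : memS p ν (ε / (1 + C)) 0 x := by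
  have h1C : (0:ℝ) < 1 + C := by linarith
  intro n
  cases n with
  | zero =>
      rw [h0, hν.map_one]
      have hb : bnd p (ε/(1+C)) 0 0 = 0 := by rw [bnd]; norm_num
      rw [hb]
      exact le_of_eq EReal.coe_zero
  | succ n =>
      refine le_trans ?_ (hx (n+1))
      rw [EReal.coe_le_coe_iff]
      rw [bnd, bnd, div_div_eq_mul_div]
      rw [div_le_div_iff_of_pos_right hε]
      push_cast
      have hp0 : (0:ℝ) ≤ (p:ℝ)^(n+1) := by positivity
      have hn : (0:ℝ) ≤ (n:ℝ) := Nat.cast_nonneg n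
      nlinarith [mul_nonneg (mul_nonneg hn hC) hp0]

end Part7

end St17Aux


open St17Aux in
/-- An overconvergent Witt vector `α` has an overconvergent inverse iff
its zeroth Witt component `a₀` is a unit in `A`. -/
theorem statement17 (p : ℕ) [Fact p.Prime] (A : Type*) [CommRing A]
    (hpA : ((p : ℕ) : A) = 0)
    (ν : A → EReal) (hν : IsPseudovaluation ν) (hproper : ∀ a : A, ν a ≠ ⊥)
    (α : WittVector p A) (hα : IsOverconvergent p ν α) :
    (∃ β : WittVector p A, α * β = 1 ∧ IsOverconvergent p ν β) ↔
      IsUnit (α.coeff 0) := by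
  constructor
  · rintro ⟨β, hmul, -⟩
    have h1 : (α * β).coeff 0 = 1 := by rw [hmul, WittVector.one_coeff_zero]
    rw [WittVector.mul_coeff_zero] at h1
    exact IsUnit.of_mul_eq_one _ h1
  · intro hu
    rcases subsingleton_or_nontrivial A with hA | hA
    · refine ⟨1, ?_, ?_⟩
      · apply WittVector.ext; intro n; exact Subsingleton.elim _ _
      · exact memS_isOverconvergent p one_pos le_rfl
          (memS_one p hν hproper one_pos le_rfl)
    · haveI : CharP A p := charP_of_cast_eq_zero p hpA
      obtain ⟨ε, C, hε, hC, hmem⟩ := isOverconvergent_memS p hproper hα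
      set uinv : A := ((hu.unit⁻¹ : Aˣ) : A) with huinv
      obtain ⟨r, hr⟩ : ∃ r : ℝ, (r : EReal) ≤ ν uinv := exists_real_le (hproper uinv)
      set C₁ : ℝ := max (max C 0) (-r * ε) with hC₁def
      have hC₁ : 0 ≤ C₁ := le_trans (le_max_right C 0) (le_max_left _ _)
      have hCC₁ : C ≤ C₁ := le_trans (le_max_left C 0) (le_max_left _ _)
      have hrC₁ : -C₁ / ε ≤ r := by
        rw [div_le_iff₀ hε]
        have : -r * ε ≤ C₁ := le_max_right _ _
        nlinarith
      have hbnd0 : bnd p ε C₁ 0 = -C₁ / ε := by rw [bnd]; norm_num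
      have htei : memS p ν ε C₁ (WittVector.teichmuller p uinv) := by
        apply memS_teichmuller p hν hproper hε hC₁
        rw [hbnd0]
        exact le_trans (EReal.coe_le_coe_iff.mpr hrC₁) hr
      have hαm : memS p ν ε C₁ α := memS_mono p hν hproper hε le_rfl hC hCC₁ hmem
      have hα'S : memS p ν ε (C₁ + C₁) (WittVector.teichmuller p uinv * α) :=
        memS_mul p hν hproper hε hC₁ hC₁ htei hαm
      have h0' : (WittVector.teichmuller p uinv * α).coeff 0 = 1 := by
        rw [WittVector.mul_coeff_zero, WittVector.teichmuller_coeff_zero]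
        rw [huinv]
        exact hu.val_inv_mul
      set ε' : ℝ := ε / (1 + (C₁ + C₁)) with hε'def
      have hε' : 0 < ε' := div_pos hε (by linarith)
      have hα'' : memS p ν ε' 0 (WittVector.teichmuller p uinv * α) :=
        memS_normalize p hν hε (by linarith) h0' hα'S
      obtain ⟨β', hβ'mul, hβ'S⟩ := inverse_normalized p hν hproper hε' h0' hα''
      refine ⟨WittVector.teichmuller p uinv * β', ?_, ?_⟩
      · calc α * (WittVector.teichmuller p uinv * β')
            = (WittVector.teichmuller p uinv * α) * β' := by ring
          _ = 1 := hβ'mul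
      · set C₂ : ℝ := max 0 (-r * ε') with hC₂def
        have hC₂ : 0 ≤ C₂ := le_max_left _ _
        have hrC₂ : -C₂ / ε' ≤ r := by
          rw [div_le_iff₀ hε']
          have : -r * ε' ≤ C₂ := le_max_right _ _
          nlinarith
        have hbnd0' : bnd p ε' C₂ 0 = -C₂ / ε' := by rw [bnd]; norm_num
        have htei' : memS p ν ε' C₂ (WittVector.teichmuller p uinv) := by
          apply memS_teichmuller p hν hproper hε' hC₂
          rw [hbnd0']
          exact le_trans (EReal.coe_le_coe_iff.mpr hrC₂) hr
        have hprod : memS p ν ε' (C₂ + 0) (WittVector.teichmuller p uinv * β') :=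
          memS_mul p hν hproper hε' hC₂ le_rfl htei' hβ'S
        exact memS_isOverconvergent p hε' (by linarith) hprod
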